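/- Let L be a relational language, A a finite L-structure, B a finite L-structure, U a countably infinite L-structure, and k, D positive integers. If U ⟶ (B)^A_{k,D}, then there exists a finite substructure C of U such that C ⟶ (B)^A_{k,D}. -/

import Mathlib

/-!
Statement 2 (compactness): Let `L` be a relational language, `A`, `B` finite `L`-structures,
`U` a countably infinite `L`-structure and `k, D` positive integers. If `U ⟶ (B)^A_{k,D}`
then there exists a finite substructure `C` of `U` with `C ⟶ (B)^A_{k,D}`.
-/

open FirstOrder FirstOrder.Language

/-- `C ⟶ (B)^A_{k,l}`: for every colouring of the embeddings of `A` into `C` with `k` colours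
there is an embedding `f : B ↪ C` such that the embeddings of `A` into `C` with range inside
`f[B]` receive at most `l` colours. -/
def Arrow (L : FirstOrder.Language.{0, 0}) (C B A : Type) [L.Structure C] [L.Structure B]
    [L.Structure A] (k l : ℕ) : Prop :=
  ∀ χ : (A ↪[L] C) → Fin k, ∃ f : B ↪[L] C,
    Set.ncard { c : Fin k | ∃ e : A ↪[L] C, Set.range ⇑e ⊆ Set.range ⇑f ∧ χ e = c } ≤ l

theorem arrow_compactness
    (L : FirstOrder.Language.{0, 0}) [L.IsRelational]
    (A : Type) [L.Structure A] [Finite A]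
    (B : Type) [L.Structure B] [Finite B]
    (U : Type) [L.Structure U] [Countable U] [Infinite U]
    (k D : ℕ) (hk : 0 < k) (hD : 0 < D)
    (hU : Arrow L U B A k D) :
    ∃ C : L.Substructure U, (C : Set U).Finite ∧ Arrow L C B A k D := by
  by_contra hcon
  push_neg at hcon
  -- enumerate U
  obtain ⟨g⟩ : Nonempty (ℕ ≃ U) := nonempty_equiv_of_countable
  -- the increasing chain of finite substructures
  set C : ℕ → L.Substructure U := fun n => Substructure.closure L (g '' Set.Iic n) with hCdef
  have hCcoe : ∀ n, (C n : Set U) = g '' Set.Iic n := fun n =>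
    Substructure.closure_eq_of_isRelational L _
  have hCfin : ∀ n, (C n : Set U).Finite := by
    intro n
    rw [hCcoe]
    exact ((Set.finite_Iic n).image g)
  have hCmono : ∀ {m n : ℕ}, m ≤ n → (C m : Set U) ⊆ (C n : Set U) := by
    intro m n hmn
    rw [hCcoe, hCcoe]
    exact Set.image_mono (Set.Iic_subset_Iic.2 hmn)
  -- each C n fails, yielding a bad colouring
  have hbad : ∀ n, ∃ χ : (A ↪[L] ↥(C n)) → Fin k, ∀ f : B ↪[L] ↥(C n),
      D < Set.ncard { c : Fin k | ∃ e : A ↪[L] ↥(C n),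
        Set.range ⇑e ⊆ Set.range ⇑f ∧ χ e = c } := by
    intro n
    have := hcon (C n) (hCfin n)
    unfold Arrow at this
    push_neg at this
    exact this
  choose χbad hχbad using hbad
  -- extend each bad colouring to all embeddings A ↪ U
  classical
  set χ' : ℕ → (A ↪[L] U) → Fin k := fun n e =>
    if h : ∀ a, e a ∈ C n then χbad n (Language.Embedding.codRestrict (C n) e h) else ⟨0, hk⟩
    with hχ'def
  have hχ'restr : ∀ n (e : A ↪[L] ↥(C n)), χ' n ((C n).subtype.comp e) = χbad n e := by
    intro n e
    have h : ∀ a, ((C n).subtype.comp e) a ∈ C n := fun a => (e a).2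
    have : Language.Embedding.codRestrict (C n) ((C n).subtype.comp e) h = e := by
      ext a
      simp [Language.Embedding.codRestrict_apply]
    rw [hχ'def]
    simp only [dif_pos h, this]
  -- limit colouring via an ultrafilter
  set u : Ultrafilter ℕ := Filter.hyperfilter ℕ with hudef
  have hlim : ∀ e : A ↪[L] U, ∃ c : Fin k, {n | χ' n e = c} ∈ u := by
    intro e
    obtain ⟨c, hc⟩ := (Ultrafilter.map (fun n => χ' n e) u).eq_pure_of_finite
    refine ⟨c, ?_⟩
    have : {c} ∈ Ultrafilter.map (fun n => χ' n e) u := by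
      rw [hc]; exact rfl
    have := Ultrafilter.mem_map.1 this
    simpa [Set.preimage, Set.mem_singleton_iff] using this
  choose χ hχ using hlim
  -- apply the hypothesis on U
  obtain ⟨f, hf⟩ := hU χ
  -- find N with range f inside C N
  obtain ⟨N, hN⟩ : ∃ N, ∀ b : B, g.symm (f b) ≤ N := by
    obtain ⟨N, hN⟩ := (Set.finite_range fun b => g.symm (f b)).bddAbove
    exact ⟨N, fun b => hN (Set.mem_range_self b)⟩
  have hrangef : ∀ n, N ≤ n → ∀ b : B, f b ∈ C n := by
    intro n hn b
    have : f b ∈ (C N : Set U) := by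
      rw [hCcoe]
      exact ⟨g.symm (f b), hN b, by simp⟩
    exact hCmono hn this
  -- the finite set of relevant embeddings into U
  set S : Set (A ↪[L] U) := {e | Set.range ⇑e ⊆ Set.range ⇑f} with hSdef
  have hSfin : S.Finite := by
    have h1 : ((fun e : A ↪[L] U => ⇑e) '' S).Finite := by
      apply Set.Finite.subset (Set.Finite.pi (t := fun _ : A => Set.range ⇑f)
        (fun _ => Set.finite_range _))
      rintro _ ⟨e, he, rfl⟩
      intro a _
      exact he (Set.mem_range_self a)
    exact Set.Finite.of_finite_image h1 fun e₁ _ e₂ _ h =>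
      DFunLike.coe_injective h
  -- choose a good index n
  have hT : ({n | N ≤ n} ∩ ⋂ e ∈ S, {n | χ' n e = χ e}) ∈ u := by
    apply Filter.inter_mem
    · apply Filter.hyperfilter_le_cofinite
      simp only [Filter.mem_cofinite]
      have : {n : ℕ | N ≤ n}ᶜ = Set.Iio N := by
        ext n; simp only [Set.mem_compl_iff, Set.mem_setOf_eq, Set.mem_Iio, not_le]
      rw [this]
      exact Set.finite_Iio N
    · exact (Filter.biInter_mem hSfin).2 fun e _ => hχ e
  obtain ⟨n, hn⟩ := Ultrafilter.nonempty_of_mem hT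
  obtain ⟨hnN, hnS⟩ := hn
  simp only [Set.mem_iInter] at hnS
  -- restrict f to C n
  set f' : B ↪[L] ↥(C n) := Language.Embedding.codRestrict (C n) f (hrangef n hnN) with hf'def
  have hlt := hχbad n f'
  -- the small colour set embeds into the big one
  have hsub : { c : Fin k | ∃ e : A ↪[L] ↥(C n),
      Set.range ⇑e ⊆ Set.range ⇑f' ∧ χbad n e = c } ⊆
      { c : Fin k | ∃ e : A ↪[L] U, Set.range ⇑e ⊆ Set.range ⇑f ∧ χ e = c } := by
    rintro c ⟨e, hre, hce⟩
    refine ⟨(C n).subtype.comp e, ?_, ?_⟩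
    · rintro _ ⟨a, rfl⟩
      obtain ⟨b, hb⟩ := hre (Set.mem_range_self a)
      refine ⟨b, ?_⟩
      have : (f' b : U) = ((e a : ↥(C n)) : U) := congrArg Subtype.val hb
      simpa [hf'def, Language.Embedding.codRestrict_apply] using this
    · have heS : (C n).subtype.comp e ∈ S := by
        rintro _ ⟨a, rfl⟩
        obtain ⟨b, hb⟩ := hre (Set.mem_range_self a)
        refine ⟨b, ?_⟩
        have : (f' b : U) = ((e a : ↥(C n)) : U) := congrArg Subtype.val hb
        simpa [hf'def, Language.Embedding.codRestrict_apply] using this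
      have h1 := hnS ((C n).subtype.comp e) heS
      have h2 := hχ'restr n e
      rw [← h1, h2, hce]
  have hfin : { c : Fin k | ∃ e : A ↪[L] U,
      Set.range ⇑e ⊆ Set.range ⇑f ∧ χ e = c }.Finite := Set.toFinite _
  have := (Set.ncard_le_ncard hsub hfin).trans hf
  omega
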